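/- arXiv:2011.00079 — 3 statements merged into one kernel-verified Lean document; each statement's English description precedes it below -/
import Mathlib

section
/- Let Ω ⊆ ℂ be open, let h, g : Ω → ℂ be holomorphic, and set f = h + conj ∘ g. Let I ⊆ ℝ be an open interval and let γ : I → Ω be differentiable with g'(γ(t)) = e^{it} · h'(γ(t)) for all t ∈ I (so γ parametrizes part of the critical set of f, on which |∂f| = |∂̄f|). Then for every t_0 ∈ I the curve f ∘ γ is differentiable at t_0 with derivative (f ∘ γ)'(t_0) = e^{−i t_0/2} ψ(t_0), where ψ(t) = 2 Re( e^{i t/2} h'(γ(t)) γ'(t) ); in particular e^{i t_0/2} (f ∘ γ)'(t_0) is a real number. -/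
open Filter Metric Set Topology

noncomputable section

/-- The Wirtinger derivative ∂f = (1/2)(∂f/∂x − i ∂f/∂y). -/
def wDz (f : ℂ → ℂ) (z : ℂ) : ℂ :=
  (fderiv ℝ f z 1 - Complex.I * fderiv ℝ f z Complex.I) / 2

/-- The Wirtinger derivative ∂̄f = (1/2)(∂f/∂x + i ∂f/∂y). -/
def wDzbar (f : ℂ → ℂ) (z : ℂ) : ℂ :=
  (fderiv ℝ f z 1 + Complex.I * fderiv ℝ f z Complex.I) / 2

/-- A harmonic mapping on an open set: locally `f = h + conj ∘ g` with `h`, `g` holomorphic. -/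
def IsHarmonicMappingOn (f : ℂ → ℂ) (Ω : Set ℂ) : Prop :=
  ∀ z ∈ Ω, ∃ ε > 0, Metric.ball z ε ⊆ Ω ∧ ∃ h g : ℂ → ℂ,
    DifferentiableOn ℂ h (Metric.ball z ε) ∧ DifferentiableOn ℂ g (Metric.ball z ε) ∧
    ∀ w ∈ Metric.ball z ε, f w = h w + (starRingEnd ℂ) (g w)

/-- The harmonic Newton map of `f − η`. -/
def newtonMap (f : ℂ → ℂ) (η : ℂ) (z : ℂ) : ℂ :=
  z - ((starRingEnd ℂ) (wDz f z) * (f z - η) - wDzbar f z * (starRingEnd ℂ) (f z - η)) /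
      (((‖wDz f z‖ ^ 2 - ‖wDzbar f z‖ ^ 2 : ℝ)) : ℂ)

/-- `zstar` attracts `s` under the harmonic Newton map of `f − η`. -/
def NewtonAttracts (f : ℂ → ℂ) (η : ℂ) (s zstar : ℂ) : Prop :=
  Filter.Tendsto (fun k => (newtonMap f η)^[k] s) Filter.atTop (nhds zstar)

/-- Limit of the harmonic Newton iteration started at `s`. -/
def newtonLim (f : ℂ → ℂ) (η : ℂ) (s : ℂ) : ℂ :=
  limUnder Filter.atTop (fun k => (newtonMap f η)^[k] s)

/-- `S` is a (minimal) prediction set for the solution set `Z` of `f(z) = η`. -/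
def IsPredSet (f : ℂ → ℂ) (η : ℂ) (S Z : Set ℂ) : Prop :=
  S.Finite ∧ Z.Finite ∧ S.ncard = Z.ncard ∧
    ∀ z ∈ Z, ∃! s, s ∈ S ∧ NewtonAttracts f η s z


/-- Tangent vector to the caustic: (f ∘ γ)'(t₀) = e^{−i t₀/2} ψ(t₀) where
ψ(t) = 2 Re(e^{i t/2} h'(γ(t)) γ'(t)); in particular e^{i t₀/2} (f ∘ γ)'(t₀) is real. -/
theorem tangent_to_caustic (Ω : Set ℂ) (hΩ : IsOpen Ω) (h g : ℂ → ℂ)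
    (hh : DifferentiableOn ℂ h Ω) (hg : DifferentiableOn ℂ g Ω)
    (f : ℂ → ℂ) (hf : ∀ z, f z = h z + (starRingEnd ℂ) (g z))
    (a b : ℝ) (γ γ' : ℝ → ℂ)
    (hγΩ : ∀ t ∈ Set.Ioo a b, γ t ∈ Ω)
    (hγ : ∀ t ∈ Set.Ioo a b, HasDerivAt γ (γ' t) t)
    (hcrit : ∀ t ∈ Set.Ioo a b,
      deriv g (γ t) = Complex.exp (Complex.I * (t : ℂ)) * deriv h (γ t))
    (ψ : ℝ → ℝ)
    (hψ : ∀ t : ℝ, ψ t = 2 * (Complex.exp (Complex.I * (t : ℂ) / 2) * deriv h (γ t) * γ' t).re)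
    (t₀ : ℝ) (ht₀ : t₀ ∈ Set.Ioo a b) :
    HasDerivAt (fun t : ℝ => f (γ t))
      (Complex.exp (-Complex.I * (t₀ : ℂ) / 2) * ((ψ t₀ : ℝ) : ℂ)) t₀ ∧
    ∃ x : ℝ, Complex.exp (Complex.I * (t₀ : ℂ) / 2) * deriv (fun t : ℝ => f (γ t)) t₀
      = (x : ℂ) := by
  have hmem := hγΩ t₀ ht₀
  have hhd : HasDerivAt h (deriv h (γ t₀)) (γ t₀) :=
    (hh.differentiableAt (hΩ.mem_nhds hmem)).hasDerivAt
  have hgd : HasDerivAt g (deriv g (γ t₀)) (γ t₀) :=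
    (hg.differentiableAt (hΩ.mem_nhds hmem)).hasDerivAt
  have hγd := hγ t₀ ht₀
  set c := deriv h (γ t₀) with hc
  set v := γ' t₀ with hv
  have hcrit₀ : deriv g (γ t₀) = Complex.exp (Complex.I * (t₀ : ℂ)) * c := hcrit t₀ ht₀
  have hhc : HasDerivAt (fun t : ℝ => h (γ t)) (v • c) t₀ := hhd.scomp t₀ hγd
  have hgc : HasDerivAt (fun t : ℝ => g (γ t))
      (v • (Complex.exp (Complex.I * (t₀ : ℂ)) * c)) t₀ := by
    have := hgd.scomp t₀ hγd
    rwa [hcrit₀] at this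
  have hconj : HasDerivAt (fun t : ℝ => (starRingEnd ℂ) (g (γ t)))
      ((starRingEnd ℂ) (v • (Complex.exp (Complex.I * (t₀ : ℂ)) * c))) t₀ := by
    have := (Complex.conjCLE.hasFDerivAt.comp_hasDerivAt t₀ hgc)
    exact this
  have hsum : HasDerivAt (fun t : ℝ => f (γ t))
      (v • c + (starRingEnd ℂ) (v • (Complex.exp (Complex.I * (t₀ : ℂ)) * c))) t₀ := by
    have := hhc.add hconj
    have hfe : (fun t : ℝ => f (γ t)) = fun t => h (γ t) + (starRingEnd ℂ) (g (γ t)) :=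
      funext fun t => hf _
    rw [hfe]; exact this
  set E := Complex.exp (Complex.I * (t₀ : ℂ) / 2) with hEdef
  have hE : E ≠ 0 := Complex.exp_ne_zero _
  have hEinv : Complex.exp (-Complex.I * (t₀ : ℂ) / 2) = E⁻¹ := by
    rw [hEdef, ← Complex.exp_neg]
    ring_nf
  have hconjE : (starRingEnd ℂ) E = E⁻¹ := by
    rw [hEdef, ← Complex.exp_conj, ← Complex.exp_neg]
    congr 1
    simp [map_div₀, Complex.conj_I, map_ofNat]
    ring
  have hE2 : Complex.exp (Complex.I * (t₀ : ℂ)) = E * E := by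
    rw [hEdef, ← Complex.exp_add]
    ring_nf
  have hψval : ((ψ t₀ : ℝ) : ℂ) = E * c * v + (starRingEnd ℂ) (E * c * v) := by
    rw [hψ t₀]
    rw [← hEdef, ← hc, ← hv]
    push_cast
    rw [Complex.add_conj]
    push_cast
    ring
  have hval : Complex.exp (-Complex.I * (t₀ : ℂ) / 2) * ((ψ t₀ : ℝ) : ℂ)
      = v • c + (starRingEnd ℂ) (v • (Complex.exp (Complex.I * (t₀ : ℂ)) * c)) := by
    rw [hEinv, hψval, hE2]
    simp only [smul_eq_mul, map_mul, hconjE]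
    field_simp
  have hmain : HasDerivAt (fun t : ℝ => f (γ t))
      (Complex.exp (-Complex.I * (t₀ : ℂ) / 2) * ((ψ t₀ : ℝ) : ℂ)) t₀ := by
    rw [hval]; exact hsum
  refine ⟨hmain, ⟨ψ t₀, ?_⟩⟩
  rw [hmain.deriv, hEinv, ← mul_assoc, mul_inv_cancel₀ hE, one_mul]
end
end

section
/- Let Ω ⊆ ℂ be open, let h, g : Ω → ℂ be holomorphic, and set f = h + conj ∘ g. Let I ⊆ ℝ be an open interval and let γ : I → Ω be differentiable with g'(γ(t)) = e^{it} · h'(γ(t)) for all t ∈ I. Write τ(t) = (f ∘ γ)'(t) and ψ(t) = 2 Re( e^{i t/2} h'(γ(t)) γ'(t) ). Let t_0 ∈ I with ψ(t_0) ≠ 0, and let θ be a real-valued function, continuous on a neighborhood J ⊆ I of t_0, such that τ(t) = |τ(t)| e^{i θ(t)} for all t ∈ J (a continuous argument of the tangent vector). Then θ is differentiable at t_0 with θ'(t_0) = −1/2; i.e., the rate of change of the argument of the tangent vector to the caustic parametrized by f ∘ γ is constantly −1/2. -/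
open Filter Metric Set Topology

noncomputable section

private lemma int_ne_half_pi (m n : ℤ) :
    Real.pi * m ≠ Real.pi * n + Real.pi / 2 := by
  intro hfx
  have hπ := Real.pi_pos
  have h1 : Real.pi * (m : ℝ) = Real.pi * ((n : ℝ) + 1/2) := by rw [hfx]; ring
  have h2 : (m : ℝ) = (n : ℝ) + 1/2 := mul_left_cancel₀ hπ.ne' h1
  have h3 : ((2*m : ℤ) : ℝ) = ((2*n + 1 : ℤ) : ℝ) := by push_cast; linarith
  have h4 : (2*m : ℤ) = 2*n+1 := by exact_mod_cast h3
  omega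

private lemma const_of_pi_int {φ : ℝ → ℝ} {s e : ℝ} (hse : s ≤ e)
    (hc : ContinuousOn φ (Set.Icc s e))
    (hval : ∀ t ∈ Set.Icc s e, ∃ n : ℤ, φ t = Real.pi * n) : φ e = φ s := by
  have hπ := Real.pi_pos
  obtain ⟨ns, hns⟩ := hval s ⟨le_refl s, hse⟩
  obtain ⟨ne', hne⟩ := hval e ⟨hse, le_refl e⟩
  rcases lt_trichotomy (φ s) (φ e) with hlt | heq | hgt
  · exfalso
    have hstep : φ s + Real.pi ≤ φ e := by
      have h1 : (ns:ℝ) < ne' := by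
        rw [hns, hne] at hlt
        exact (mul_lt_mul_iff_right₀ hπ).1 hlt
      have h2 : (ns:ℝ) + 1 ≤ ne' := by
        exact_mod_cast Int.add_one_le_iff.mpr (by exact_mod_cast h1)
      rw [hns, hne]; nlinarith
    have h1 : φ s + Real.pi/2 ∈ Set.Icc (φ s) (φ e) := ⟨by linarith, by linarith⟩
    obtain ⟨x, hx, hfx⟩ := intermediate_value_Icc hse hc h1
    obtain ⟨m, hm⟩ := hval x hx
    rw [hm, hns] at hfx
    exact int_ne_half_pi m ns (by linarith)
  · exact heq.symm
  · exfalso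
    have hstep : φ e + Real.pi ≤ φ s := by
      have h1 : (ne':ℝ) < ns := by
        rw [hns, hne] at hgt
        exact (mul_lt_mul_iff_right₀ hπ).1 hgt
      have h2 : (ne':ℝ) + 1 ≤ ns := by
        exact_mod_cast Int.add_one_le_iff.mpr (by exact_mod_cast h1)
      rw [hns, hne]; nlinarith
    have h1 : φ e + Real.pi/2 ∈ Set.Icc (φ e) (φ s) := ⟨by linarith, by linarith⟩
    obtain ⟨x, hx, hfx⟩ := intermediate_value_Icc' hse hc h1
    obtain ⟨m, hm⟩ := hval x hx
    rw [hm, hne] at hfx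
    exact int_ne_half_pi m ne' (by linarith)

/-- At a fold point(ψ(t₀) ≠ 0), any continuous argument θ of the tangent vector
τ = (f ∘ γ)' satisfies θ'(t₀) = −1/2: the curvature of the caustics is constant. -/
theorem caustic_argument_derivative (Ω : Set ℂ) (hΩ : IsOpen Ω) (h g : ℂ → ℂ)
    (hh : DifferentiableOn ℂ h Ω) (hg : DifferentiableOn ℂ g Ω)
    (f : ℂ → ℂ) (hf : ∀ z, f z = h z + (starRingEnd ℂ) (g z))
    (a b : ℝ) (γ γ' : ℝ → ℂ)
    (hγΩ : ∀ t ∈ Set.Ioo a b, γ t ∈ Ω)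
    (hγ : ∀ t ∈ Set.Ioo a b, HasDerivAt γ (γ' t) t)
    (hcrit : ∀ t ∈ Set.Ioo a b,
      deriv g (γ t) = Complex.exp (Complex.I * (t : ℂ)) * deriv h (γ t))
    (ψ : ℝ → ℝ)
    (hψ : ∀ t : ℝ, ψ t = 2 * (Complex.exp (Complex.I * (t : ℂ) / 2) * deriv h (γ t) * γ' t).re)
    (t₀ : ℝ) (ht₀ : t₀ ∈ Set.Ioo a b) (hψt₀ : ψ t₀ ≠ 0)
    (θ : ℝ → ℝ) (J : Set ℝ) (hJ : J ∈ nhds t₀) (hJI : J ⊆ Set.Ioo a b)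
    (hθcont : ContinuousOn θ J)
    (hθarg : ∀ t ∈ J, deriv (fun u : ℝ => f (γ u)) t =
      ((‖deriv (fun u : ℝ => f (γ u)) t‖ : ℝ) : ℂ) *
        Complex.exp (Complex.I * ((θ t : ℝ) : ℂ))) :
    HasDerivAt θ (-(1 / 2)) t₀ := by
  have hπ := Real.pi_pos
  have hha : AnalyticOnNhd ℂ h Ω := hh.analyticOnNhd hΩ
  have hga : AnalyticOnNhd ℂ g Ω := hg.analyticOnNhd hΩ
  have hHa : AnalyticOnNhd ℂ (deriv h) Ω := hha.deriv
  have hGa : AnalyticOnNhd ℂ (deriv g) Ω := hga.deriv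
  -- tangent vector formula
  have htau : ∀ t ∈ Set.Ioo a b,
      HasDerivAt (fun u : ℝ => f (γ u))
        (γ' t * deriv h (γ t) + (starRingEnd ℂ) (γ' t * deriv g (γ t))) t := by
    intro t ht
    have hγt := hγ t ht
    have hmem := hγΩ t ht
    have d1 : HasDerivAt (fun u : ℝ => h (γ u)) (γ' t • deriv h (γ t)) t :=
      ((hh.differentiableAt (hΩ.mem_nhds hmem)).hasDerivAt).scomp t hγt
    have d2 : HasDerivAt (fun u : ℝ => g (γ u)) (γ' t • deriv g (γ t)) t :=
      ((hg.differentiableAt (hΩ.mem_nhds hmem)).hasDerivAt).scomp t hγt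
    have d3 := d1.add d2.star
    have : (fun u : ℝ => f (γ u)) = fun u : ℝ => h (γ u) + star (g (γ u)) := by
      funext u; rw [hf (γ u)]; rfl
    rw [this, show γ' t * deriv h (γ t) + (starRingEnd ℂ) (γ' t * deriv g (γ t)) =
      γ' t • deriv h (γ t) + star (γ' t • deriv g (γ t)) by
        rw [smul_eq_mul, smul_eq_mul, starRingEnd_apply]]
    exact d3
  -- τ t = ψ t · exp(-it/2)
  have htauval : ∀ t ∈ Set.Ioo a b, deriv (fun u : ℝ => f (γ u)) t =
      ((ψ t : ℝ) : ℂ) * Complex.exp (-(Complex.I * (t : ℂ)) / 2) := by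
    intro t ht
    rw [(htau t ht).deriv, hcrit t ht, hψ t]
    have hre : ((2 * (Complex.exp (Complex.I * (t:ℂ) / 2) * deriv h (γ t) * γ' t).re : ℝ) : ℂ)
        = Complex.exp (Complex.I * (t:ℂ) / 2) * deriv h (γ t) * γ' t +
          (starRingEnd ℂ) (Complex.exp (Complex.I * (t:ℂ) / 2) * deriv h (γ t) * γ' t) := by
      rw [Complex.add_conj]
    rw [hre]
    have hEX : Complex.exp (Complex.I * (t:ℂ) / 2) * Complex.exp (-(Complex.I * (t:ℂ)) / 2) = 1 := by
      rw [← Complex.exp_add, show Complex.I * (t:ℂ) / 2 + -(Complex.I * (t:ℂ)) / 2 = 0 by ring,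
        Complex.exp_zero]
    have hexpIt : Complex.exp (Complex.I * (t:ℂ)) =
        Complex.exp (Complex.I * (t:ℂ) / 2) * Complex.exp (Complex.I * (t:ℂ) / 2) := by
      rw [← Complex.exp_add]; congr 1; ring
    have hconjE : (starRingEnd ℂ) (Complex.exp (Complex.I * (t:ℂ) / 2)) =
        Complex.exp (-(Complex.I * (t:ℂ)) / 2) := by
      rw [← Complex.exp_conj]
      congr 1
      rw [map_div₀, map_mul, Complex.conj_I, Complex.conj_ofReal, map_ofNat]
      ring
    rw [hexpIt]
    simp only [map_mul, hconjE]
    linear_combination (-(γ' t * deriv h (γ t))) * hEX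
  -- the set U where deriv h ≠ 0
  set U : Set ℂ := Ω ∩ (deriv h) ⁻¹' {0}ᶜ with hU
  have hUopen : IsOpen U := (hHa.continuousOn).isOpen_inter_preimage hΩ isOpen_compl_singleton
  have hH0 : deriv h (γ t₀) ≠ 0 := by
    intro h0; apply hψt₀; rw [hψ t₀, h0]; simp
  have hγU : γ t₀ ∈ U := ⟨hγΩ t₀ ht₀, by simpa using hH0⟩
  have hNnhds : {t : ℝ | γ t ∈ U} ∈ 𝓝 t₀ := (hγ t₀ ht₀).continuousAt (hUopen.mem_nhds hγU)
  obtain ⟨c, d, htcd, hcd⟩ := mem_nhds_iff_exists_Ioo_subset.1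
    (inter_mem (inter_mem hNnhds hJ) (isOpen_Ioo.mem_nhds ht₀))
  -- basic facts on Ioo c d
  have hmemU : ∀ t ∈ Set.Ioo c d, γ t ∈ U := fun t ht => (hcd ht).1.1
  have hmemJ : ∀ t ∈ Set.Ioo c d, t ∈ J := fun t ht => (hcd ht).1.2
  have hmemab : ∀ t ∈ Set.Ioo c d, t ∈ Set.Ioo a b := fun t ht => (hcd ht).2
  -- the holomorphic function w = g'/h'
  set w : ℂ → ℂ := fun z => deriv g z / deriv h z with hwdef
  have hwdiff : ∀ z ∈ U, DifferentiableAt ℂ w z := by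
    intro z hz
    exact ((hGa z hz.1).differentiableAt).div ((hHa z hz.1).differentiableAt)
      (by simpa using hz.2)
  have hwU : DifferentiableOn ℂ w U := fun z hz => (hwdiff z hz).differentiableWithinAt
  have hwa : AnalyticOnNhd ℂ w U := hwU.analyticOnNhd hUopen
  have hw'cont : ContinuousOn (deriv w) U := hwa.deriv.continuousOn
  -- w(γ u) = exp(I u) on Ioo c d
  have hwγ : ∀ u ∈ Set.Ioo c d, w (γ u) = Complex.exp (Complex.I * (u:ℂ)) := by
    intro u hu
    show deriv g (γ u) / deriv h (γ u) = _
    rw [hcrit u (hmemab u hu)]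
    exact mul_div_cancel_right₀ _ (by simpa using (hmemU u hu).2)
  -- key derivative relation
  have hkey : ∀ t ∈ Set.Ioo c d,
      γ' t * deriv w (γ t) = Complex.exp (Complex.I * (t:ℂ)) * Complex.I := by
    intro t ht
    have hγt := hγ t (hmemab t ht)
    have c1 : HasDerivAt (fun u : ℝ => w (γ u)) (γ' t • deriv w (γ t)) t :=
      ((hwdiff _ (hmemU t ht)).hasDerivAt).scomp t hγt
    have lin : HasDerivAt (fun u : ℝ => Complex.I * (u : ℂ)) Complex.I t := by
      simpa using (Complex.ofRealCLM.hasDerivAt (x := t)).const_mul Complex.I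
    have c2 : HasDerivAt (fun u : ℝ => Complex.exp (Complex.I * (u:ℂ)))
        (Complex.exp (Complex.I * (t:ℂ)) * Complex.I) t := by
      simpa using lin.cexp
    have heq : (fun u : ℝ => w (γ u)) =ᶠ[𝓝 t] fun u : ℝ => Complex.exp (Complex.I * (u:ℂ)) := by
      filter_upwards [isOpen_Ioo.mem_nhds ht] with u hu using hwγ u hu
    have c2' : HasDerivAt (fun u : ℝ => w (γ u))
        (Complex.exp (Complex.I * (t:ℂ)) * Complex.I) t := c2.congr_of_eventuallyEq heq
    have := c1.unique c2'
    simpa [smul_eq_mul] using this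
  have hDne : ∀ t ∈ Set.Ioo c d, deriv w (γ t) ≠ 0 := by
    intro t ht h0
    have := hkey t ht
    rw [h0, mul_zero] at this
    exact mul_ne_zero (Complex.exp_ne_zero _) Complex.I_ne_zero this.symm
  have hγ'form : ∀ t ∈ Set.Ioo c d,
      γ' t = Complex.exp (Complex.I * (t:ℂ)) * Complex.I / deriv w (γ t) := by
    intro t ht
    rw [eq_div_iff (hDne t ht)]
    exact hkey t ht
  -- continuity of ψ at t₀
  have hψcont : ContinuousAt ψ t₀ := by
    have hγc : ContinuousAt γ t₀ := (hγ t₀ ht₀).continuousAt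
    have hHc : ContinuousAt (deriv h) (γ t₀) := (hHa _ (hγΩ t₀ ht₀)).continuousAt
    have hwc : ContinuousAt (deriv w) (γ t₀) := hw'cont.continuousAt (hUopen.mem_nhds hγU)
    have hcform : ContinuousAt (fun t : ℝ => 2 * (Complex.exp (Complex.I * (t:ℂ) / 2) *
        deriv h (γ t) * (Complex.exp (Complex.I * (t:ℂ)) * Complex.I / deriv w (γ t))).re) t₀ := by
      apply ContinuousAt.mul continuousAt_const
      apply Complex.continuous_re.continuousAt.comp
      apply ContinuousAt.mul
      · apply ContinuousAt.mul
        · exact (Complex.continuous_exp.comp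
            ((continuous_const.mul Complex.continuous_ofReal).div_const 2)).continuousAt
        · exact hHc.comp hγc
      · apply ContinuousAt.div
        · exact (((Complex.continuous_exp.comp
            (continuous_const.mul Complex.continuous_ofReal)).mul continuous_const)).continuousAt
        · exact hwc.comp hγc
        · exact hDne t₀ htcd
    apply hcform.congr
    filter_upwards [isOpen_Ioo.mem_nhds htcd] with t ht
    rw [hψ t, ← hγ'form t ht]
  have hψne : {t : ℝ | ψ t ≠ 0} ∈ 𝓝 t₀ := hψcont.eventually_ne hψt₀
  obtain ⟨c', d', ht₀', hsub'⟩ := mem_nhds_iff_exists_Ioo_subset.1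
    (inter_mem (isOpen_Ioo.mem_nhds htcd) hψne)
  -- the angle relation: θ t + t/2 ∈ πℤ on Ioo c' d'
  have hphi : ∀ t ∈ Set.Ioo c' d', ∃ n : ℤ, θ t + t/2 = Real.pi * n := by
    intro t ht
    obtain ⟨htcd2, hψt⟩ := hsub' ht
    have e1 := hθarg t (hmemJ t htcd2)
    rw [htauval t (hmemab t htcd2)] at e1
    have habs : ‖(ψ t : ℂ) * Complex.exp (-(Complex.I * (t:ℂ)) / 2)‖ = |ψ t| := by
      rw [norm_mul, Complex.norm_real, Complex.norm_exp]
      simp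
    rw [habs] at e1
    have e2 : ((ψ t : ℂ) * Complex.exp (-(Complex.I * (t:ℂ)) / 2))^2 =
        ((|ψ t| : ℝ) * Complex.exp (Complex.I * ((θ t : ℝ) : ℂ)))^2 := by
      push_cast
      rw [e1]
    have habs2 : ((|ψ t| : ℝ) : ℂ)^2 = ((ψ t : ℝ) : ℂ)^2 := by
      norm_cast
      exact sq_abs _
    rw [mul_pow, mul_pow, habs2] at e2
    have hψC : ((ψ t : ℝ) : ℂ)^2 ≠ 0 := pow_ne_zero _ (by exact_mod_cast hψt)
    have e3 : Complex.exp (-(Complex.I * (t:ℂ)) / 2)^2 =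
        Complex.exp (Complex.I * ((θ t : ℝ) : ℂ))^2 := mul_left_cancel₀ hψC e2
    rw [sq, sq, ← Complex.exp_add, ← Complex.exp_add] at e3
    obtain ⟨n, hn⟩ := Complex.exp_eq_exp_iff_exists_int.1 e3
    refine ⟨-n, ?_⟩
    have h2 : Complex.I * (-(t:ℂ)) =
        Complex.I * (2*((θ t : ℝ):ℂ) + 2*(Real.pi:ℂ)*(n:ℂ)) := by
      push_cast at hn ⊢
      linear_combination hn
    have h3 := mul_left_cancel₀ Complex.I_ne_zero h2
    have h4 : (-t : ℝ) = 2*θ t + 2*Real.pi*(n:ℝ) := by exact_mod_cast h3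
    push_cast
    linarith
  -- θ t + t/2 is constant on Ioo c' d'
  have hsubJ : Set.Ioo c' d' ⊆ J := fun t ht => hmemJ t (hsub' ht).1
  have hcont' : ContinuousOn (fun t : ℝ => θ t + t/2) (Set.Ioo c' d') :=
    (hθcont.mono hsubJ).add (continuous_id.div_const 2).continuousOn
  have hconst : ∀ t ∈ Set.Ioo c' d', θ t + t/2 = θ t₀ + t₀/2 := by
    intro t ht
    rcases le_total t₀ t with hle | hle
    · have hIcc : Set.Icc t₀ t ⊆ Set.Ioo c' d' := fun s hs =>
        ⟨lt_of_lt_of_le ht₀'.1 hs.1, lt_of_le_of_lt hs.2 ht.2⟩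
      exact const_of_pi_int hle (hcont'.mono hIcc) (fun s hs => hphi s (hIcc hs))
    · have hIcc : Set.Icc t t₀ ⊆ Set.Ioo c' d' := fun s hs =>
        ⟨lt_of_lt_of_le ht.1 hs.1, lt_of_le_of_lt hs.2 ht₀'.2⟩
      exact (const_of_pi_int hle (hcont'.mono hIcc) (fun s hs => hphi s (hIcc hs))).symm
  -- conclude
  have hlin : HasDerivAt (fun t : ℝ => (θ t₀ + t₀/2) - t/2) (-(1/2)) t₀ := by
    simpa using ((hasDerivAt_id t₀).div_const 2).const_sub (θ t₀ + t₀/2)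
  apply hlin.congr_of_eventuallyEq
  filter_upwards [isOpen_Ioo.mem_nhds ht₀'] with t ht
  have := hconst t ht
  linarith
end
end

section
/- Let Ω ⊆ ℂ be open, let h, g : Ω → ℂ be holomorphic, and set f = h + conj ∘ g. Let I ⊆ ℝ be an open interval and let γ : I → Ω be real-analytic with g'(γ(t)) = e^{it} · h'(γ(t)) for all t ∈ I, and set ψ(t) = 2 Re( e^{i t/2} h'(γ(t)) γ'(t) ). Then for every compact interval [a,b] ⊆ I, either ψ has only finitely many zeros in [a,b], or ψ vanishes identically on [a,b], and in the latter case f ∘ γ is constant on [a,b]. -/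
open Filter Metric Set Topology

noncomputable section

/-- On any compact subinterval, ψ has only finitely many zeros or vanishes identically,
and in the latter case f ∘ γ is constant there. -/
theorem psi_finitely_many_zeros_or_constant (Ω : Set ℂ) (hΩ : IsOpen Ω) (h g : ℂ → ℂ)
    (hh : DifferentiableOn ℂ h Ω) (hg : DifferentiableOn ℂ g Ω)
    (f : ℂ → ℂ) (hf : ∀ z, f z = h z + (starRingEnd ℂ) (g z))
    (a b : ℝ) (γ : ℝ → ℂ)
    (hγΩ : ∀ t ∈ Set.Ioo a b, γ t ∈ Ω)
    (hγ : AnalyticOnNhd ℝ γ (Set.Ioo a b))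
    (hcrit : ∀ t ∈ Set.Ioo a b,
      deriv g (γ t) = Complex.exp (Complex.I * (t : ℂ)) * deriv h (γ t))
    (ψ : ℝ → ℝ)
    (hψ : ∀ t : ℝ, ψ t =
      2 * (Complex.exp (Complex.I * (t : ℂ) / 2) * deriv h (γ t) * deriv γ t).re)
    (a' b' : ℝ) (hab : Set.Icc a' b' ⊆ Set.Ioo a b) :
    {t ∈ Set.Icc a' b' | ψ t = 0}.Finite ∨
    ((∀ t ∈ Set.Icc a' b', ψ t = 0) ∧
      ∀ t₁ ∈ Set.Icc a' b', ∀ t₂ ∈ Set.Icc a' b', f (γ t₁) = f (γ t₂)) := by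
  have hhA : AnalyticOnNhd ℂ h Ω := hh.analyticOnNhd hΩ
  have hdh : AnalyticOnNhd ℂ (deriv h) Ω := hhA.deriv
  -- analyticity of ψ
  have hψA : AnalyticOnNhd ℝ ψ (Set.Ioo a b) := by
    intro t ht
    have h1 : AnalyticAt ℝ (fun s : ℝ => deriv h (γ s)) t :=
      ((hdh (γ t) (hγΩ t ht)).restrictScalars).comp (hγ t ht)
    have h2 : AnalyticAt ℝ (deriv γ) t := (hγ.deriv) t ht
    have h3 : AnalyticAt ℝ (fun s : ℝ => Complex.exp (Complex.I * (s : ℂ) / 2)) t := by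
      have houter : AnalyticAt ℝ (fun z : ℂ => Complex.exp (Complex.I * z / 2)) ((t : ℝ) : ℂ) :=
        (analyticAt_cexp.comp ((analyticAt_const.mul analyticAt_id).div analyticAt_const
          (by norm_num))).restrictScalars
      exact houter.comp (Complex.ofRealCLM.analyticAt t)
    have h4 : AnalyticAt ℝ (fun s : ℝ =>
        (Complex.exp (Complex.I * (s : ℂ) / 2) * deriv h (γ s) * deriv γ s).re) t :=
      (Complex.reCLM.analyticAt _).comp ((h3.mul h1).mul h2)
    have : AnalyticAt ℝ (fun s : ℝ => 2 *
        (Complex.exp (Complex.I * (s : ℂ) / 2) * deriv h (γ s) * deriv γ s).re) t :=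
      analyticAt_const.mul h4
    exact this.congr (Filter.Eventually.of_forall fun s => (hψ s).symm)
  by_cases hfin : {t ∈ Set.Icc a' b' | ψ t = 0}.Finite
  · exact Or.inl hfin
  right
  -- ψ vanishes on Ioo a b
  have hzero : ∀ t ∈ Set.Ioo a b, ψ t = 0 := by
    have hinf : {t ∈ Set.Icc a' b' | ψ t = 0}.Infinite := hfin
    obtain ⟨x, hxK, hx⟩ := hinf.exists_accPt_of_subset_isCompact
      isCompact_Icc (Set.sep_subset _ _)
    have hfreq : ∃ᶠ y in 𝓝[≠] x, ψ y = 0 := by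
      rw [accPt_iff_frequently] at hx
      rw [frequently_nhdsWithin_iff]
      exact hx.mono fun y hy => ⟨hy.2.2, hy.1⟩
    have := hψA.eqOn_zero_of_preconnected_of_frequently_eq_zero isPreconnected_Ioo
      (hab hxK) hfreq
    exact fun t ht => this ht
  refine ⟨fun t ht => hzero t (hab ht), ?_⟩
  -- derivative of f ∘ γ vanishes on Ioo a b
  have hD : ∀ t ∈ Set.Ioo a b, HasDerivAt (fun s => f (γ s)) 0 t := by
    intro t ht
    have hγd : HasDerivAt γ (deriv γ t) t := (hγ t ht).differentiableAt.hasDerivAt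
    have hhd : HasDerivAt h (deriv h (γ t)) (γ t) :=
      (hh.differentiableAt (hΩ.mem_nhds (hγΩ t ht))).hasDerivAt
    have hgd : HasDerivAt g (deriv g (γ t)) (γ t) :=
      (hg.differentiableAt (hΩ.mem_nhds (hγΩ t ht))).hasDerivAt
    have c1 : HasDerivAt (fun s => h (γ s)) (deriv h (γ t) * deriv γ t) t :=
      HasDerivAt.comp t hhd hγd
    have c2 : HasDerivAt (fun s => g (γ s)) (deriv g (γ t) * deriv γ t) t :=
      HasDerivAt.comp t hgd hγd
    have c3 : HasDerivAt (fun s => (starRingEnd ℂ) (g (γ s)))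
        ((starRingEnd ℂ) (deriv g (γ t) * deriv γ t)) t := by
      have := (Complex.conjCLE.hasFDerivAt (x := g (γ t))).comp_hasDerivAt t c2
      exact this
    have c4 : HasDerivAt (fun s => h (γ s) + (starRingEnd ℂ) (g (γ s)))
        (deriv h (γ t) * deriv γ t + (starRingEnd ℂ) (deriv g (γ t) * deriv γ t)) t :=
      c1.add c3
    have hkey : deriv h (γ t) * deriv γ t + (starRingEnd ℂ) (deriv g (γ t) * deriv γ t) = 0 := by
      set w : ℂ := Complex.exp (Complex.I * (t : ℂ) / 2) * deriv h (γ t) * deriv γ t with hw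
      have hwre : w.re = 0 := by
        have := hzero t ht
        rw [hψ t] at this
        linarith
      have hconj : (starRingEnd ℂ) (Complex.exp (Complex.I * (t:ℂ) / 2)) =
          Complex.exp (-(Complex.I * (t:ℂ) / 2)) := by
        rw [← Complex.exp_conj]
        congr 1
        rw [map_div₀, map_mul, Complex.conj_I, Complex.conj_ofReal, map_ofNat]
        ring
      have hE : Complex.exp (Complex.I * (t:ℂ) / 2) ≠ 0 := Complex.exp_ne_zero _
      have hmul : Complex.exp (Complex.I * (t:ℂ) / 2) *
          (deriv h (γ t) * deriv γ t + (starRingEnd ℂ) (deriv g (γ t) * deriv γ t))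
          = w + (starRingEnd ℂ) w := by
        rw [hcrit t ht, hw]
        rw [map_mul, map_mul, map_mul, map_mul, ← Complex.exp_conj, ← Complex.exp_conj]
        have e1 : (starRingEnd ℂ) (Complex.I * (t:ℂ)) = -(Complex.I * (t:ℂ)) := by
          simp [Complex.conj_ofReal]
        have e2 : (starRingEnd ℂ) (Complex.I * (t:ℂ) / 2) = -(Complex.I * (t:ℂ)) / 2 := by
          rw [map_div₀, map_mul, Complex.conj_I, Complex.conj_ofReal, map_ofNat]
          ring
        rw [e1, e2]
        have e3 : Complex.exp (Complex.I * (t:ℂ) / 2) * Complex.exp (-(Complex.I * (t:ℂ)))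
            = Complex.exp (-(Complex.I * (t:ℂ)) / 2) := by
          rw [← Complex.exp_add]; ring_nf
        calc Complex.exp (Complex.I * (t:ℂ) / 2) *
            (deriv h (γ t) * deriv γ t +
              Complex.exp (-(Complex.I * (t:ℂ))) * (starRingEnd ℂ) (deriv h (γ t)) *
                (starRingEnd ℂ) (deriv γ t))
            = Complex.exp (Complex.I * (t:ℂ) / 2) * deriv h (γ t) * deriv γ t +
              (Complex.exp (Complex.I * (t:ℂ) / 2) * Complex.exp (-(Complex.I * (t:ℂ)))) *
                (starRingEnd ℂ) (deriv h (γ t)) * (starRingEnd ℂ) (deriv γ t) := by ring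
          _ = _ := by rw [e3]
      have : Complex.exp (Complex.I * (t:ℂ) / 2) *
          (deriv h (γ t) * deriv γ t + (starRingEnd ℂ) (deriv g (γ t) * deriv γ t)) = 0 := by
        rw [hmul, Complex.add_conj, hwre]
        norm_num
      exact (mul_eq_zero.mp this).resolve_left hE
    have : HasDerivAt (fun s => h (γ s) + (starRingEnd ℂ) (g (γ s))) 0 t := hkey ▸ c4
    exact this.congr_of_eventuallyEq (Filter.Eventually.of_forall fun s => hf (γ s))
  -- constancy on Icc a' b'
  have hconst : ∀ t ∈ Set.Icc a' b', f (γ t) = f (γ a') := by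
    apply constant_of_has_deriv_right_zero
    · intro x hx
      exact ((hD x (hab hx)).continuousAt).continuousWithinAt
    · intro x hx
      exact (hD x (hab (Set.mem_Icc_of_Ico hx))).hasDerivWithinAt
  intro t₁ h₁ t₂ h₂
  rw [hconst t₁ h₁, hconst t₂ h₂]
end
end
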